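/- For every real number t > 0, define V₈(t) = t(14 + t⁻³) if t⁻³ ≤ 10 and V₈(t) = 24t if t⁻³ ≥ 10. Then V₈(t) ∈ E(t), and every element e of E(t) with e ∉ {γ₁(t), γ₂(t), γ₃(t), γ₄(t), γ₅(t), γ₆(t), 8t} satisfies e ≥ V₈(t). -/

import Mathlib

/-- `γ_n(t) = t·n·(2 + n·t⁻³)` -/
noncomputable def gammaF (t : ℝ) (n : ℕ) : ℝ := t * n * (2 + n * (t ^ 3)⁻¹)

/-- `α_k(t) = t·(k(k+2) − 1 + t⁻³)` -/
noncomputable def alphaF (t : ℝ) (k : ℕ) : ℝ := t * (k * (k + 2) - 1 + (t ^ 3)⁻¹)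

/-- `β_l(t) = t·l·(l+2)` -/
noncomputable def betaF (t : ℝ) (l : ℕ) : ℝ := t * l * (l + 2)

/-- The set `E(t)` of nonzero eigenvalues of the unit-volume Berger sphere Laplacian. -/
def EV (t : ℝ) : Set ℝ :=
  {x | ∃ n : ℕ, 1 ≤ n ∧ x = gammaF t n} ∪
  {x | ∃ k : ℕ, Odd k ∧ 1 ≤ k ∧ x = alphaF t k} ∪
  {x | ∃ l : ℕ, Even l ∧ 2 ≤ l ∧ x = betaF t l}

theorem berger_lambda8 (t : ℝ) (ht : 0 < t) :
    ∃ V : ℝ,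
      ((t ^ 3)⁻¹ ≤ 10 → V = t * (14 + (t ^ 3)⁻¹)) ∧
      (10 ≤ (t ^ 3)⁻¹ → V = 24 * t) ∧
      V ∈ EV t ∧
      ∀ e ∈ EV t, e ∉ ({gammaF t 1, gammaF t 2, gammaF t 3, gammaF t 4, gammaF t 5, gammaF t 6, 8 * t} : Set ℝ) → V ≤ e := by
  have hs0 : 0 < (t ^ 3)⁻¹ := by positivity
  set s := (t ^ 3)⁻¹ with hsdef
  refine ⟨min (t * (14 + s)) (24 * t), ?_, ?_, ?_, ?_⟩
  · intro h
    exact min_eq_left (by nlinarith)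
  · intro h
    exact min_eq_right (by nlinarith)
  · rcases min_cases (t * (14 + s)) (24 * t) with ⟨h, _⟩ | ⟨h, _⟩
    · rw [h]
      exact Or.inl (Or.inr ⟨3, ⟨1, by norm_num⟩, by norm_num, by norm_num [alphaF]; exact Or.inl hsdef⟩)
    · rw [h]
      refine Or.inr ⟨4, ⟨2, by norm_num⟩, by norm_num, ?_⟩
      unfold betaF; push_cast; ring
  · rintro e ((⟨n, hn, rfl⟩ | ⟨k, hk, hk1, rfl⟩) | ⟨l, hl, hl2, rfl⟩) hbad
    · by_cases hn7 : 7 ≤ n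
      · have hn7' : (7 : ℝ) ≤ (n : ℝ) := by exact_mod_cast hn7
        have hnn : (0:ℝ) ≤ (n:ℝ) * (n:ℝ) - 1 := by nlinarith
        have : t * (14 + s) ≤ gammaF t n := by
          unfold gammaF
          rw [← hsdef]
          nlinarith [mul_pos ht hs0, mul_nonneg ht.le (sub_nonneg.2 hn7'),
            mul_nonneg (mul_pos ht hs0).le hnn]
        exact le_trans (min_le_left _ _) this
      · interval_cases n <;> simp at hbad
    · rcases Nat.lt_or_ge k 3 with hk3 | hk3
      · interval_cases k
        · exfalso
          apply hbad
          left
          unfold alphaF gammaF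
          push_cast
          ring
        · rcases hk with ⟨m, hm⟩; omega
      · have hk3' : (3 : ℝ) ≤ (k : ℝ) := by exact_mod_cast hk3
        have hkk : (0:ℝ) ≤ (k:ℝ) * ((k:ℝ) + 2) - 15 := by nlinarith
        have : t * (14 + s) ≤ alphaF t k := by
          unfold alphaF
          rw [← hsdef]
          nlinarith [mul_nonneg ht.le hkk]
        exact le_trans (min_le_left _ _) this
    · rcases Nat.lt_or_ge l 4 with hl4 | hl4
      · interval_cases l
        · exfalso
          apply hbad
          simp only [Set.mem_insert_iff, Set.mem_singleton_iff]
          right; right; right; right; right; right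
          unfold betaF
          push_cast
          ring
        · rcases hl with ⟨m, hm⟩; omega
      · have hl4' : (4 : ℝ) ≤ (l : ℝ) := by exact_mod_cast hl4
        have hll : (0:ℝ) ≤ (l:ℝ) * ((l:ℝ) + 2) - 24 := by nlinarith
        have : 24 * t ≤ betaF t l := by
          unfold betaF
          nlinarith [mul_nonneg ht.le hll]
        exact le_trans (min_le_right _ _) this
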